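/- Fix ρ ∈ (−1,1), φ > 0. Define F(θ) = (2 e^{−θ/8}/(θφ)) · ∫_ℝ exp(−A_θ y² − (ρ/4) y √(y² + θ)) dy/√(2π) with A_θ = (1+ρ²)/8 + 2/(θ²φ²). Then F(θ) = e^{−θ/8}/√(1 + (1+ρ²)θ²φ²/16) · (1 + o(1)) as θ → 0⁺. -/

import Mathlib

open MeasureTheory Filter Real Set

private lemma sqrt_add_le' {a b : ℝ} (ha : 0 ≤ a) (hb : 0 ≤ b) :
    Real.sqrt (a + b) ≤ Real.sqrt a + Real.sqrt b := by
  rw [show Real.sqrt a + Real.sqrt b = Real.sqrt ((Real.sqrt a + Real.sqrt b)^2) from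
    (Real.sqrt_sq (by positivity)).symm]
  apply Real.sqrt_le_sqrt
  have h1 : Real.sqrt a ^ 2 = a := Real.sq_sqrt ha
  have h2 : Real.sqrt b ^ 2 = b := Real.sq_sqrt hb
  nlinarith [Real.sqrt_nonneg a, Real.sqrt_nonneg b]

set_option maxHeartbeats 2000000 in
theorem vol_swap_asymptotic_formula
    (ρ φ : ℝ) (hρ : ρ ∈ Set.Ioo (-1:ℝ) 1) (hφ : 0 < φ)
    (A : ℝ → ℝ) (hA : ∀ θ, A θ = (1 + ρ^2) / 8 + 2 / (θ^2 * φ^2))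
    (F : ℝ → ℝ)
    (hF : ∀ θ, F θ = (2 * Real.exp (-θ / 8) / (θ * φ)) *
        ∫ y : ℝ, Real.exp (-(A θ) * y^2 - (ρ / 4) * y * Real.sqrt (y^2 + θ)) / Real.sqrt (2 * Real.pi)) :
    Filter.Tendsto
      (fun θ => F θ / (Real.exp (-θ / 8) / Real.sqrt (1 + (1 + ρ^2) * θ^2 * φ^2 / 16)))
      (nhdsWithin 0 (Set.Ioi 0)) (nhds 1) := by
  obtain ⟨hρ1, hρ2⟩ := hρ
  have hρabs : |ρ| ≤ 1 := by rw [abs_le]; constructor <;> linarith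
  set l := nhdsWithin (0:ℝ) (Set.Ioi 0) with hl
  -- the rescaled integrand
  set h : ℝ → ℝ → ℝ := fun θ u =>
    Real.exp (-u^2 - ρ/4 * u * Real.sqrt ((A θ)⁻¹) * Real.sqrt (u^2 * (A θ)⁻¹ + θ)) with hh
  -- basic facts on A for θ > 0
  have hApos : ∀ θ : ℝ, 0 < θ → 0 < A θ := by
    intro θ hθ
    rw [hA]
    have : 0 < 2 / (θ^2 * φ^2) := by positivity
    nlinarith [sq_nonneg ρ]
  have hAinv_le : ∀ θ : ℝ, 0 < θ → (A θ)⁻¹ ≤ θ^2 * φ^2 / 2 := by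
    intro θ hθ
    have h2 : 2 / (θ^2 * φ^2) ≤ A θ := by rw [hA]; nlinarith [sq_nonneg ρ]
    have h3 : 0 < 2 / (θ^2 * φ^2) := by positivity
    calc (A θ)⁻¹ ≤ (2 / (θ^2 * φ^2))⁻¹ := by
          apply inv_anti₀ h3 h2
      _ = θ^2 * φ^2 / 2 := by field_simp
  -- the main limit: ∫ h θ → √π
  have hmain : Tendsto (fun θ => ∫ u : ℝ, h θ u) l (nhds (Real.sqrt Real.pi)) := by
    have hgauss : ∫ u : ℝ, Real.exp (-u^2) = Real.sqrt Real.pi := by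
      have := integral_gaussian 1
      simpa using this
    rw [← hgauss]
    set δ := min 1 φ⁻¹ with hδ
    have hδpos : 0 < δ := by positivity
    apply tendsto_integral_filter_of_dominated_convergence
      (fun u : ℝ => Real.exp (1/24) * Real.exp (-(1/2) * u^2))
    · -- measurability
      filter_upwards with θ
      apply Continuous.aestronglyMeasurable
      fun_prop
    · -- bound
      have hmem : Ioo (0:ℝ) δ ∈ l := Ioo_mem_nhdsGT_of_mem (by simp [hδpos.le, hδpos])
      filter_upwards [hmem] with θ hθ
      obtain ⟨hθ0, hθδ⟩ := hθ
      have hθ1 : θ ≤ 1 := le_trans hθδ.le (min_le_left _ _)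
      have hθφ : θ * φ ≤ 1 := by
        have : θ ≤ φ⁻¹ := le_trans hθδ.le (min_le_right _ _)
        calc θ * φ ≤ φ⁻¹ * φ := by nlinarith
          _ = 1 := by field_simp
      set s := (A θ)⁻¹ with hs
      have hs0 : 0 ≤ s := le_of_lt (inv_pos.mpr (hApos θ hθ0))
      have hs2 : s ≤ 1/2 := by
        have h1 := hAinv_le θ hθ0
        have h2 : θ^2 * φ^2 ≤ 1 := by nlinarith [mul_pos hθ0 hφ]
        rw [hs]; nlinarith
      filter_upwards with u
      have hgbound : |ρ/4 * u * Real.sqrt s * Real.sqrt (u^2 * s + θ)| ≤ u^2/8 + |u|/4 := by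
        have e1 : Real.sqrt (u^2 * s + θ) ≤ Real.sqrt (u^2 * s) + Real.sqrt θ :=
          sqrt_add_le' (by positivity) hθ0.le
        have e2 : Real.sqrt (u^2 * s) = |u| * Real.sqrt s := by
          rw [Real.sqrt_mul (sq_nonneg u), Real.sqrt_sq_eq_abs]
        have e3 : Real.sqrt s * Real.sqrt θ = Real.sqrt (s * θ) := (Real.sqrt_mul hs0 θ).symm
        have e4 : Real.sqrt (s * θ) ≤ 1 := by
          rw [show (1:ℝ) = Real.sqrt 1 from Real.sqrt_one.symm]
          apply Real.sqrt_le_sqrt; nlinarith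
        have e5 : Real.sqrt s * Real.sqrt s = s := Real.mul_self_sqrt hs0
        have habs : |ρ/4 * u * Real.sqrt s * Real.sqrt (u^2 * s + θ)|
            = |ρ|/4 * |u| * Real.sqrt s * Real.sqrt (u^2 * s + θ) := by
          rw [abs_mul, abs_mul, abs_mul,
            abs_of_nonneg (Real.sqrt_nonneg s), abs_of_nonneg (Real.sqrt_nonneg _),
            abs_div]
          norm_num
        rw [habs]
        have key : |u| * Real.sqrt s * Real.sqrt (u^2 * s + θ) ≤ u^2 * s + |u| := by
          calc |u| * Real.sqrt s * Real.sqrt (u^2 * s + θ)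
              ≤ |u| * Real.sqrt s * (|u| * Real.sqrt s + Real.sqrt θ) := by
                apply mul_le_mul_of_nonneg_left _ (by positivity)
                rw [← e2]; exact e1
            _ = u^2 * s + |u| * Real.sqrt (s * θ) := by
                rw [← e3]
                have : |u| * |u| = u^2 := by rw [← abs_mul, abs_of_nonneg (by nlinarith [sq_nonneg u] : (0:ℝ) ≤ u * u)]; ring
                nlinarith [Real.sqrt_nonneg s, Real.sqrt_nonneg θ]
            _ ≤ u^2 * s + |u| := by nlinarith [abs_nonneg u]
        have hsu : u^2 * s ≤ u^2 / 2 := by nlinarith [sq_nonneg u]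
        have h4 : |ρ|/4 ≤ 1/4 := by linarith
        have hrest : (0:ℝ) ≤ |u| * Real.sqrt s * Real.sqrt (u^2 * s + θ) := by positivity
        calc |ρ|/4 * |u| * Real.sqrt s * Real.sqrt (u^2 * s + θ)
            = |ρ|/4 * (|u| * Real.sqrt s * Real.sqrt (u^2 * s + θ)) := by ring
          _ ≤ 1/4 * (u^2 * s + |u|) := by
              apply mul_le_mul h4 key hrest (by norm_num)
          _ ≤ u^2/8 + |u|/4 := by nlinarith
      rw [hh]
      simp only
      rw [Real.norm_eq_abs, abs_of_nonneg (Real.exp_pos _).le, ← Real.exp_add]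
      apply Real.exp_le_exp.mpr
      have h1 := neg_abs_le (ρ/4 * u * Real.sqrt ((A θ)⁻¹) * Real.sqrt (u^2 * (A θ)⁻¹ + θ))
      have h2 : u^2 = |u|^2 := (sq_abs u).symm
      nlinarith [sq_nonneg (3 * |u| - 1), abs_nonneg u, hgbound,
        neg_abs_le (ρ/4 * u * Real.sqrt ((A θ)⁻¹) * Real.sqrt (u^2 * (A θ)⁻¹ + θ))]
    · -- integrability of the bound
      exact (integrable_exp_neg_mul_sq (by norm_num : (0:ℝ) < 1/2)).const_mul _
    · -- pointwise convergence
      filter_upwards with u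
      have hsA : Tendsto (fun θ => (A θ)⁻¹) l (nhds 0) := by
        apply squeeze_zero'
        · filter_upwards [self_mem_nhdsWithin] with θ hθ
          exact le_of_lt (inv_pos.mpr (hApos θ hθ))
        · filter_upwards [self_mem_nhdsWithin] with θ hθ
          exact hAinv_le θ hθ
        · have : Tendsto (fun θ : ℝ => θ^2 * φ^2 / 2) (nhds 0) (nhds (0^2 * φ^2 / 2)) := by
            apply Tendsto.div_const; apply Tendsto.mul_const; exact (continuous_pow 2).tendsto 0
          simpa using this.mono_left nhdsWithin_le_nhds
      have hθ0 : Tendsto (fun θ : ℝ => θ) l (nhds 0) := tendsto_id.mono_left nhdsWithin_le_nhds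
      have hexp : Tendsto (fun θ => -u^2 - ρ/4 * u * Real.sqrt ((A θ)⁻¹)
          * Real.sqrt (u^2 * (A θ)⁻¹ + θ)) l (nhds (-u^2)) := by
        have t1 : Tendsto (fun θ => Real.sqrt ((A θ)⁻¹)) l (nhds 0) := by
          have := (Real.continuous_sqrt.tendsto 0).comp hsA
          rw [Real.sqrt_zero] at this
          exact this
        have t2 : Tendsto (fun θ => u^2 * (A θ)⁻¹ + θ) l (nhds 0) := by
          have := ((hsA.const_mul (u^2)).add hθ0)
          simpa using this
        have t3 : Tendsto (fun θ => Real.sqrt (u^2 * (A θ)⁻¹ + θ)) l (nhds 0) := by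
          have := (Real.continuous_sqrt.tendsto 0).comp t2
          simpa [Function.comp_def] using this
        have t4 : Tendsto (fun θ => ρ/4 * u * Real.sqrt ((A θ)⁻¹)
            * Real.sqrt (u^2 * (A θ)⁻¹ + θ)) l (nhds 0) := by
          have := ((t1.const_mul (ρ/4 * u)).mul t3)
          simpa using this
        have t5 : Tendsto (fun θ => -u^2 - (ρ/4 * u * Real.sqrt ((A θ)⁻¹)
            * Real.sqrt (u^2 * (A θ)⁻¹ + θ))) l (nhds (-u^2 - 0)) :=
          tendsto_const_nhds.sub t4
        simpa using t5
      have := (Real.continuous_exp.tendsto _).comp hexp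
      simpa [hh, Function.comp_def] using this
  -- rewrite the ratio as (√π)⁻¹ * ∫ h θ for θ > 0
  have heq : ∀ᶠ θ in l,
      F θ / (Real.exp (-θ / 8) / Real.sqrt (1 + (1 + ρ^2) * θ^2 * φ^2 / 16))
      = (Real.sqrt Real.pi)⁻¹ * ∫ u : ℝ, h θ u := by
    filter_upwards [self_mem_nhdsWithin] with θ (hθ : 0 < θ)
    have hAθ : 0 < A θ := hApos θ hθ
    have hc : Real.sqrt (A θ) > 0 := Real.sqrt_pos.mpr hAθ
    -- change of variables
    have hcov : (∫ u : ℝ, h θ u)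
        = Real.sqrt (A θ) * ∫ y : ℝ, Real.exp (-(A θ) * y^2 - (ρ / 4) * y * Real.sqrt (y^2 + θ)) := by
      have key : ∀ u : ℝ, h θ u
          = Real.exp (-(A θ) * (u / Real.sqrt (A θ))^2
              - (ρ / 4) * (u / Real.sqrt (A θ)) * Real.sqrt ((u / Real.sqrt (A θ))^2 + θ)) := by
        intro u
        simp only [hh]
        rw [Real.exp_eq_exp]
        have hsq : Real.sqrt (A θ) ^ 2 = A θ := Real.sq_sqrt hAθ.le
        have e1 : -(A θ) * (u / Real.sqrt (A θ))^2 = -u^2 := by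
          rw [div_pow, hsq]; field_simp
        have e2 : (u / Real.sqrt (A θ))^2 = u^2 * (A θ)⁻¹ := by
          rw [div_pow, hsq]; field_simp
        have e3 : u / Real.sqrt (A θ) = u * Real.sqrt ((A θ)⁻¹) := by
          rw [Real.sqrt_inv, div_eq_mul_inv]
        rw [e1, e2, e3]; ring
      calc (∫ u : ℝ, h θ u)
          = ∫ u : ℝ, Real.exp (-(A θ) * (u / Real.sqrt (A θ))^2
              - (ρ / 4) * (u / Real.sqrt (A θ)) * Real.sqrt ((u / Real.sqrt (A θ))^2 + θ)) := by
            exact integral_congr_ae (Filter.Eventually.of_forall fun u => key u)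
        _ = |Real.sqrt (A θ)| • ∫ y : ℝ, Real.exp (-(A θ) * y^2 - (ρ / 4) * y * Real.sqrt (y^2 + θ)) :=
            MeasureTheory.Measure.integral_comp_div
              (fun y => Real.exp (-(A θ) * y^2 - (ρ / 4) * y * Real.sqrt (y^2 + θ))) (Real.sqrt (A θ))
        _ = Real.sqrt (A θ) * ∫ y : ℝ, Real.exp (-(A θ) * y^2 - (ρ / 4) * y * Real.sqrt (y^2 + θ)) := by
            rw [abs_of_pos hc, smul_eq_mul]
      -- algebra
    have hS : Real.sqrt (2 * A θ) = 2 / (θ * φ) * Real.sqrt (1 + (1 + ρ^2) * θ^2 * φ^2 / 16) := by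
      have hfac : 2 * A θ = (2 / (θ * φ))^2 * (1 + (1 + ρ^2) * θ^2 * φ^2 / 16) := by
        rw [hA]; field_simp; ring
      rw [hfac, Real.sqrt_mul (sq_nonneg _), Real.sqrt_sq (by positivity)]
    have hSpos : 0 < Real.sqrt (1 + (1 + ρ^2) * θ^2 * φ^2 / 16) := by
      apply Real.sqrt_pos.mpr; nlinarith [sq_nonneg ρ, sq_nonneg (θ * φ)]
    have hexpne : Real.exp (-θ/8) ≠ 0 := (Real.exp_pos _).ne'
    rw [hF]
    rw [MeasureTheory.integral_div]
    have hsqrt2pi : Real.sqrt (2 * Real.pi) = Real.sqrt 2 * Real.sqrt Real.pi :=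
      Real.sqrt_mul (by norm_num) _
    have hs2A : Real.sqrt (2 * A θ) = Real.sqrt 2 * Real.sqrt (A θ) :=
      Real.sqrt_mul (by norm_num) _
    have hI := hcov
    set I := ∫ y : ℝ, Real.exp (-(A θ) * y^2 - (ρ / 4) * y * Real.sqrt (y^2 + θ)) with hIdef
    -- goal: (2 e/(θφ)) * (I/√(2π)) / (e / S) = (√π)⁻¹ * (√A * I)
    rw [hI]
    have hπ : 0 < Real.sqrt Real.pi := Real.sqrt_pos.mpr Real.pi_pos
    have h2 : (0:ℝ) < Real.sqrt 2 := by positivity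
    have hθφ : (0:ℝ) < θ * φ := by positivity
    have lhs_eq : 2 / (θ * φ) * Real.sqrt (1 + (1 + ρ^2) * θ^2 * φ^2 / 16)
        = Real.sqrt 2 * Real.sqrt (A θ) := by
      rw [← hS, hs2A]
    have hS2 : Real.sqrt (1 + (1 + ρ^2) * θ^2 * φ^2 / 16)
        = θ * φ * (Real.sqrt 2 * Real.sqrt (A θ)) / 2 := by
      rw [← lhs_eq]
      field_simp
    rw [hS2, hsqrt2pi]
    field_simp
  -- conclude
  have : Tendsto (fun θ => (Real.sqrt Real.pi)⁻¹ * ∫ u : ℝ, h θ u) l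
      (nhds ((Real.sqrt Real.pi)⁻¹ * Real.sqrt Real.pi)) := hmain.const_mul _
  rw [inv_mul_cancel₀ (Real.sqrt_pos.mpr Real.pi_pos).ne'] at this
  exact Tendsto.congr' (heq.mono fun θ hθ => hθ.symm) this
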